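/- Suppose a random variable D satisfies E[f(D)] ≥ α·f⁻(𝟙_OPT − p) and E[f(D)] ≥ β·f⁻(p) for some vector p ∈ [0,1]^V with p ≤ 𝟙_OPT. Then E[f(D)] ≥ (αβ/(α+β))·f(OPT). -/

import Mathlib

open MeasureTheory Finset

/-- A set function is submodular. -/
def Submodular {V : Type*} [DecidableEq V] (f : Finset V → ℝ) : Prop :=
  ∀ A B : Finset V, f (A ∪ B) + f (A ∩ B) ≤ f A + f B

/-- The Lovász extension: expectation over a uniform threshold θ ∈ (0,1). -/
noncomputable def lovasz {V : Type*} [Fintype V] [DecidableEq V]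
    (f : Finset V → ℝ) (x : V → ℝ) : ℝ :=
  ∫ θ in Set.Ioo (0:ℝ) 1, f (Finset.univ.filter (fun i => θ ≤ x i))

/-- Characteristic vector of a finite set. -/
def charVec {V : Type*} [DecidableEq V] (S : Finset V) : V → ℝ :=
  fun i => if i ∈ S then 1 else 0

section Aux
variable {V : Type*} [Fintype V] [DecidableEq V]

lemma measurable_cut (f : Finset V → ℝ) (x : V → ℝ) :
    Measurable (fun θ : ℝ => f (Finset.univ.filter (fun i => θ ≤ x i))) := by
  have heq : (fun θ : ℝ => f (Finset.univ.filter (fun i => θ ≤ x i)))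
      = fun θ => ∑ S : Finset V,
          if Finset.univ.filter (fun i => θ ≤ x i) = S then f S else 0 := by
    funext θ
    rw [Finset.sum_ite_eq]
    simp
  rw [heq]
  apply Finset.measurable_sum
  intro S _
  have hset : MeasurableSet {θ : ℝ | Finset.univ.filter (fun i => θ ≤ x i) = S} := by
    have h2 : {θ : ℝ | Finset.univ.filter (fun i => θ ≤ x i) = S}
        = ⋂ i : V, {θ : ℝ | (θ ≤ x i ↔ i ∈ S)} := by
      ext θ; simp [Finset.ext_iff, Set.mem_iInter]
    rw [h2]
    apply MeasurableSet.iInter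
    intro i
    by_cases hi : i ∈ S
    · have : {θ : ℝ | (θ ≤ x i ↔ i ∈ S)} = Set.Iic (x i) := by
        ext θ; simp [hi]
      rw [this]; exact measurableSet_Iic
    · have : {θ : ℝ | (θ ≤ x i ↔ i ∈ S)} = Set.Ioi (x i) := by
        ext θ; simp [hi, not_le]
      rw [this]; exact measurableSet_Ioi
  have h3 : (fun θ : ℝ => if Finset.univ.filter (fun i => θ ≤ x i) = S then f S else 0)
      = Set.indicator {θ : ℝ | Finset.univ.filter (fun i => θ ≤ x i) = S} (fun _ => f S) := by
    funext θ; simp [Set.indicator]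
  rw [h3]
  exact measurable_const.indicator hset

lemma integrableOn_of_meas {g : ℝ → ℝ} (hg : Measurable g) (C : ℝ) (hC : ∀ θ, ‖g θ‖ ≤ C) :
    IntegrableOn g (Set.Ioo (0:ℝ) 1) := by
  apply Integrable.mono' (g := fun _ => C)
  · exact integrableOn_const measure_Ioo_lt_top.ne
  · exact hg.aestronglyMeasurable
  · exact ae_of_all _ hC

lemma cut_bound (f : Finset V → ℝ) (A : Finset V) :
    ‖f A‖ ≤ ∑ S : Finset V, |f S| := by
  rw [Real.norm_eq_abs]
  exact Finset.single_le_sum (fun S _ => abs_nonneg (f S)) (Finset.mem_univ _)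

end Aux

/-- Combining the two bounds yields an `αβ/(α+β)` fraction of the optimum. -/
theorem combine_bounds {V : Type*} [Fintype V] [DecidableEq V]
    (f : Finset V → ℝ) (hsub : Submodular f) (hnn : ∀ A : Finset V, 0 ≤ f A)
    (OPT : Finset V) (α β : ℝ) (hα : 0 < α) (hβ : 0 < β)
    (p : V → ℝ) (hp0 : ∀ e, 0 ≤ p e) (hp1 : ∀ e, p e ≤ charVec OPT e)
    (ED : ℝ)
    (h1 : α * lovasz f (fun e => charVec OPT e - p e) ≤ ED)
    (h2 : β * lovasz f p ≤ ED) :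
    α * β / (α + β) * f OPT ≤ ED := by
  set x : V → ℝ := fun e => charVec OPT e - p e with hx
  have hint1 : IntegrableOn (fun θ => f (Finset.univ.filter (fun i => θ ≤ x i)))
      (Set.Ioo (0:ℝ) 1) :=
    integrableOn_of_meas (measurable_cut f x) _ (fun θ => cut_bound f _)
  have hmeas2 : Measurable (fun θ : ℝ => f (Finset.univ.filter (fun i => (1-θ) ≤ p i))) :=
    (measurable_cut f p).comp (measurable_const.sub measurable_id)
  have hint2 : IntegrableOn (fun θ => f (Finset.univ.filter (fun i => (1-θ) ≤ p i)))
      (Set.Ioo (0:ℝ) 1) :=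
    integrableOn_of_meas hmeas2 _ (fun θ => cut_bound f _)
  -- pointwise bound
  have hpt : ∀ θ ∈ Set.Ioo (0:ℝ) 1,
      f OPT ≤ f (Finset.univ.filter (fun i => θ ≤ x i))
        + f (Finset.univ.filter (fun i => (1-θ) ≤ p i)) := by
    intro θ hθ
    obtain ⟨hθ0, hθ1⟩ := hθ
    set A := Finset.univ.filter (fun i => θ ≤ x i) with hA
    set B := Finset.univ.filter (fun i => (1-θ) ≤ p i) with hB
    have hOPT : A ∪ B = OPT := by
      ext i
      simp only [hA, hB, Finset.mem_union, Finset.mem_filter, Finset.mem_univ, true_and]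
      constructor
      · rintro (h | h)
        · by_contra hi
          have hpi : p i = 0 := le_antisymm (by simpa [charVec, hi] using hp1 i) (hp0 i)
          simp [hx, charVec, hi, hpi] at h
          linarith
        · by_contra hi
          have hpi : p i = 0 := le_antisymm (by simpa [charVec, hi] using hp1 i) (hp0 i)
          rw [hpi] at h; linarith
      · intro hi
        by_cases h : θ ≤ x i
        · exact Or.inl h
        · right
          have hxv : x i = 1 - p i := by simp [hx, charVec, hi]
          push_neg at h
          rw [hxv] at h
          linarith
    calc f OPT = f (A ∪ B) := by rw [hOPT]
    _ ≤ f (A ∪ B) + f (A ∩ B) := by linarith [hnn (A ∩ B)]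
    _ ≤ f A + f B := hsub A B
  have hmono : f OPT ≤ (∫ θ in Set.Ioo (0:ℝ) 1, f (Finset.univ.filter (fun i => θ ≤ x i)))
      + ∫ θ in Set.Ioo (0:ℝ) 1, f (Finset.univ.filter (fun i => (1-θ) ≤ p i)) := by
    have hc : (∫ _ in Set.Ioo (0:ℝ) 1, f OPT) = f OPT := by
      simp [Real.volume_Ioo]
    calc f OPT = ∫ _ in Set.Ioo (0:ℝ) 1, f OPT := hc.symm
    _ ≤ ∫ θ in Set.Ioo (0:ℝ) 1, (f (Finset.univ.filter (fun i => θ ≤ x i))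
          + f (Finset.univ.filter (fun i => (1-θ) ≤ p i))) :=
        setIntegral_mono_on (integrableOn_const measure_Ioo_lt_top.ne)
          (hint1.add hint2) measurableSet_Ioo hpt
    _ = _ := integral_add hint1 hint2
  -- substitution θ ↦ 1 - θ
  have hsub2 : (∫ θ in Set.Ioo (0:ℝ) 1, f (Finset.univ.filter (fun i => (1-θ) ≤ p i)))
      = lovasz f p := by
    set g : ℝ → ℝ := fun θ => f (Finset.univ.filter (fun i => θ ≤ p i)) with hg
    have hind : ∀ θ : ℝ, Set.indicator (Set.Ioo (0:ℝ) 1) (fun t => g (1-t)) θ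
        = Set.indicator (Set.Ioo (0:ℝ) 1) g (1-θ) := by
      intro θ
      by_cases h : θ ∈ Set.Ioo (0:ℝ) 1
      · have h' : 1-θ ∈ Set.Ioo (0:ℝ) 1 := by
          obtain ⟨a, b⟩ := h; constructor <;> simp <;> linarith
        rw [Set.indicator_of_mem h, Set.indicator_of_mem h']
      · have h' : 1-θ ∉ Set.Ioo (0:ℝ) 1 := by
          simp only [Set.mem_Ioo, not_and_or, not_lt] at h ⊢
          rcases h with h | h
          · right; linarith
          · left; linarith
        rw [Set.indicator_of_notMem h, Set.indicator_of_notMem h']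
    calc (∫ θ in Set.Ioo (0:ℝ) 1, g (1-θ))
        = ∫ θ, Set.indicator (Set.Ioo (0:ℝ) 1) (fun t => g (1-t)) θ :=
          (integral_indicator measurableSet_Ioo).symm
      _ = ∫ θ, Set.indicator (Set.Ioo (0:ℝ) 1) g (1-θ) := by simp_rw [hind]
      _ = ∫ θ, Set.indicator (Set.Ioo (0:ℝ) 1) g θ :=
          integral_sub_left_eq_self _ _ 1
      _ = ∫ θ in Set.Ioo (0:ℝ) 1, g θ := integral_indicator measurableSet_Ioo
  have hkey : f OPT ≤ lovasz f x + lovasz f p := by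
    rw [hsub2] at hmono
    exact hmono
  have h3 : α * β * f OPT ≤ (α + β) * ED := by
    nlinarith [mul_le_mul_of_nonneg_left h1 hβ.le, mul_le_mul_of_nonneg_left h2 hα.le,
      mul_le_mul_of_nonneg_left hkey (mul_pos hα hβ).le]
  rw [div_mul_eq_mul_div, div_le_iff₀ (by positivity : (0:ℝ) < α + β)]
  linarith
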